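/- Let m < n and let S be a formal m-partite Bell expression of the form S = P(0⃗|0⃗) − ∑_{(a⃗,x⃗)≠(0⃗,0⃗)} β_{a⃗}^{x⃗} P(a⃗|x⃗) with all β_{a⃗}^{x⃗} ≥ 0. Then for any n-partite probability distribution P, the lifted expression S_{0⃗|0⃗} minus P(0⃗|0⃗) is nonpositive: S_{0⃗|0⃗}(P) − P(0⃗|0⃗) ≤ 0. Consequently, if additionally S ≤ 0 holds for all biseparable m-partite no-signalling distributions, then for a bipartition of the n parties in which at most k of the C(n,m) (or otherwise specified) m-subsets are contained in one group, the sum of the lifted expressions over a family of m-subsets minus k·P(0⃗|0⃗) is nonpositive on all biseparable distributions. -/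
import Mathlib


open Finset

noncomputable section

/-- The all-zero string. -/
def zvec (n : ℕ) : Fin n → Fin 2 := fun _ => 0

/-- `Q` depends only on the outcomes and inputs of the parties in `S`. -/
def DepOn {n : ℕ} (S : Finset (Fin n))
    (Q : (Fin n → Fin 2) → (Fin n → Fin 2) → ℝ) : Prop :=
  ∀ a a' x x' : Fin n → Fin 2, (∀ k ∈ S, a k = a' k) → (∀ k ∈ S, x k = x' k) →
    Q a x = Q a' x'

/-- `Q` is a probability distribution on the group `S` of parties. -/
def IsDistOn {n : ℕ} (S : Finset (Fin n))
    (Q : (Fin n → Fin 2) → (Fin n → Fin 2) → ℝ) : Prop :=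
  (∀ a x, 0 ≤ Q a x) ∧ (∀ x, ∑ a, Q a x = 2 ^ (n - S.card)) ∧ DepOn S Q

/-- `Q` is no-signalling. -/
def IsNS {n : ℕ} (Q : (Fin n → Fin 2) → (Fin n → Fin 2) → ℝ) : Prop :=
  ∀ (k : Fin n) (a x x' : Fin n → Fin 2), (∀ l, l ≠ k → x l = x' l) →
    ∑ v, Q (Function.update a k v) x = ∑ v, Q (Function.update a k v) x'

/-- `P` is an `n`-partite probability distribution. -/
def IsDist (n : ℕ) (P : (Fin n → Fin 2) → (Fin n → Fin 2) → ℝ) : Prop :=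
  (∀ a x, 0 ≤ P a x) ∧ (∀ x, ∑ a, P a x = 1)

/-- `P` is biseparable along the fixed bipartition `g | gᶜ`: a convex mixture of products
of no-signalling distributions on `g` and on `gᶜ`. -/
def BisepAlong {n : ℕ} (g : Finset (Fin n))
    (P : (Fin n → Fin 2) → (Fin n → Fin 2) → ℝ) : Prop :=
  ∃ (N : ℕ) (q : Fin N → ℝ)
    (Q R : Fin N → (Fin n → Fin 2) → (Fin n → Fin 2) → ℝ),
    (∀ l, 0 ≤ q l) ∧ (∑ l, q l = 1) ∧
    (∀ l, IsDistOn g (Q l) ∧ IsNS (Q l) ∧ IsDistOn gᶜ (R l) ∧ IsNS (R l)) ∧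
    (∀ a x, P a x = ∑ l, q l * Q l a x * R l a x)

/-- `P` is biseparable: a convex mixture, over (nontrivial) bipartitions `g λ | (g λ)ᶜ`,
of products of no-signalling distributions. -/
def Bisep (n : ℕ) (P : (Fin n → Fin 2) → (Fin n → Fin 2) → ℝ) : Prop :=
  ∃ (N : ℕ) (q : Fin N → ℝ) (g : Fin N → Finset (Fin n))
    (Q R : Fin N → (Fin n → Fin 2) → (Fin n → Fin 2) → ℝ),
    (∀ l, 0 ≤ q l) ∧ (∑ l, q l = 1) ∧
    (∀ l, (g l).Nonempty ∧ (g l)ᶜ.Nonempty) ∧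
    (∀ l, IsDistOn (g l) (Q l) ∧ IsNS (Q l) ∧ IsDistOn (g l)ᶜ (R l) ∧ IsNS (R l)) ∧
    (∀ a x, P a x = ∑ l, q l * Q l a x * R l a x)

/-- The value of the seed expression
`S = P(0⃗|0⃗) − ∑_{(a,x)≠(0⃗,0⃗)} β_a^x P(a|x)` on an `m`-partite assignment `P'`. -/
def seedVal (m : ℕ) (β : (Fin m → Fin 2) → (Fin m → Fin 2) → ℝ)
    (P' : (Fin m → Fin 2) → (Fin m → Fin 2) → ℝ) : ℝ :=
  P' (zvec m) (zvec m)
    - ∑ a, ∑ x, (if a = zvec m ∧ x = zvec m then 0 else β a x * P' a x)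

/-- Extension of an `m`-party string to `n` parties along an injection `e`, filling the
remaining coordinates with `0` (this realizes the lifting of the seed to the `m`-subset
`range e`). -/
def extend0 {m n : ℕ} (e : Fin m → Fin n) (a : Fin m → Fin 2) : Fin n → Fin 2 :=
  Function.extend e a (fun _ => 0)

/-- The lifting of the seed expression to `n` parties along the `m`-subset picked out by
the injection `e`: the inputs and outcomes of the remaining `n−m` parties are fixed
to `0`. -/
def seedLift (m n : ℕ) (β : (Fin m → Fin 2) → (Fin m → Fin 2) → ℝ)
    (e : Fin m → Fin n) (P : (Fin n → Fin 2) → (Fin n → Fin 2) → ℝ) : ℝ :=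
  P (zvec n) (zvec n)
    - ∑ a, ∑ x, (if a = zvec m ∧ x = zvec m then 0
        else β a x * P (extend0 e a) (extend0 e x))

/-! ### Auxiliary lemmas -/

section Aux

lemma sum_update_double {m : ℕ} (f : (Fin m → Fin 2) → ℝ) (j : Fin m) :
    ∑ a : Fin m → Fin 2, ∑ v : Fin 2, f (Function.update a j v) = 2 * ∑ a, f a := by
  have hinv : Function.Involutive
      (fun p : (Fin m → Fin 2) × Fin 2 => (Function.update p.1 j p.2, p.1 j)) := by
    rintro ⟨a, v⟩
    simp [Function.update_idem, Function.update_eq_self]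
  have := Equiv.sum_comp hinv.toPerm (fun p : (Fin m → Fin 2) × Fin 2 => f p.1)
  simp only [Function.Involutive.coe_toPerm] at this
  rw [Fintype.sum_prod_type] at this
  rw [Fintype.sum_prod_type (f := fun p : (Fin m → Fin 2) × Fin 2 => f p.1)] at this
  simp only at this
  calc ∑ a : Fin m → Fin 2, ∑ v : Fin 2, f (Function.update a j v)
      = ∑ a : Fin m → Fin 2, ∑ _v : Fin 2, f a := this
    _ = 2 * ∑ a, f a := by
        rw [Finset.mul_sum]
        exact Finset.sum_congr rfl fun a _ => by simp [two_mul]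

/-- Merge two strings along a set. -/
def mrg {m : ℕ} (S : Finset (Fin m)) (u v : Fin m → Fin 2) : Fin m → Fin 2 :=
  fun k => if k ∈ S then u k else v k

lemma sum_mul_of_depOn {m : ℕ} (S : Finset (Fin m)) (f g : (Fin m → Fin 2) → ℝ)
    (hf : ∀ u v, (∀ k ∈ S, u k = v k) → f u = f v)
    (hg : ∀ u v, (∀ k ∉ S, u k = v k) → g u = g v) :
    (2:ℝ)^m * ∑ a, f a * g a = (∑ a, f a) * (∑ a, g a) := by
  have hinv : Function.Involutive
      (fun p : (Fin m → Fin 2) × (Fin m → Fin 2) => (mrg S p.1 p.2, mrg S p.2 p.1)) := by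
    rintro ⟨u, v⟩
    have e1 : mrg S (mrg S u v) (mrg S v u) = u := by
      funext k; by_cases h : k ∈ S <;> simp [mrg, h]
    have e2 : mrg S (mrg S v u) (mrg S u v) = v := by
      funext k; by_cases h : k ∈ S <;> simp [mrg, h]
    simp only [e1, e2]
  have key := Equiv.sum_comp hinv.toPerm
    (fun p : (Fin m → Fin 2) × (Fin m → Fin 2) => f p.1 * g p.1)
  simp only [Function.Involutive.coe_toPerm] at key
  rw [Fintype.sum_prod_type] at key
  rw [Fintype.sum_prod_type
    (f := fun p : (Fin m → Fin 2) × (Fin m → Fin 2) => f p.1 * g p.1)] at key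
  simp only at key
  have h1 : ∀ u v : Fin m → Fin 2, f (mrg S u v) = f u := fun u v =>
    hf _ _ (fun k hk => by simp [mrg, hk])
  have h2 : ∀ u v : Fin m → Fin 2, g (mrg S u v) = g v := fun u v =>
    hg _ _ (fun k hk => by simp [mrg, hk])
  have lhs : ∑ u : Fin m → Fin 2, ∑ v : Fin m → Fin 2, f (mrg S u v) * g (mrg S u v)
      = (∑ u, f u) * (∑ v, g v) := by
    calc ∑ u : Fin m → Fin 2, ∑ v : Fin m → Fin 2, f (mrg S u v) * g (mrg S u v)
        = ∑ u : Fin m → Fin 2, ∑ v : Fin m → Fin 2, f u * g v :=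
          Finset.sum_congr rfl fun u _ => Finset.sum_congr rfl fun v _ => by rw [h1, h2]
      _ = (∑ u, f u) * (∑ v, g v) := by rw [Finset.sum_mul_sum]
  rw [lhs] at key
  rw [key]
  calc (2:ℝ)^m * ∑ a : Fin m → Fin 2, f a * g a
      = ∑ a : Fin m → Fin 2, (2:ℝ)^m * (f a * g a) := by rw [Finset.mul_sum]
    _ = ∑ x : Fin m → Fin 2, ∑ _y : Fin m → Fin 2, f x * g x := by
        refine Finset.sum_congr rfl fun a _ => ?_
        rw [Finset.sum_const, nsmul_eq_mul]
        congr 1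
        simp [Fintype.card_fun]

variable {m n : ℕ} {e : Fin m → Fin n}

lemma extend0_apply (he : Function.Injective e) (a : Fin m → Fin 2) (j : Fin m) :
    extend0 e a (e j) = a j := he.extend_apply a _ j

lemma extend0_apply' (a : Fin m → Fin 2) {l : Fin n} (h : ¬∃ j, e j = l) :
    extend0 e a l = 0 := Function.extend_apply' a _ l h

lemma extend0_zvec (he : Function.Injective e) : extend0 e (zvec m) = zvec n := by
  funext l
  by_cases h : ∃ j, e j = l
  · obtain ⟨j, rfl⟩ := h; rw [extend0_apply he]; rfl
  · rw [extend0_apply' _ h]; rfl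

lemma extend0_update (he : Function.Injective e) (a : Fin m → Fin 2) (j : Fin m) (v : Fin 2) :
    extend0 e (Function.update a j v) = Function.update (extend0 e a) (e j) v := by
  funext l
  by_cases h : ∃ j', e j' = l
  · obtain ⟨j', rfl⟩ := h
    rw [extend0_apply he]
    by_cases hj : j' = j
    · subst hj; simp
    · rw [Function.update_of_ne hj, Function.update_of_ne (fun hc => hj (he hc)),
        extend0_apply he]
  · rw [extend0_apply' _ h, Function.update_of_ne (fun hc => h ⟨j, hc.symm⟩),
      extend0_apply' _ h]

lemma extend0_agree (he : Function.Injective e) {x x' : Fin m → Fin 2} {j : Fin m}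
    (hx : ∀ j', j' ≠ j → x j' = x' j') :
    ∀ l, l ≠ e j → extend0 e x l = extend0 e x' l := by
  intro l hl
  by_cases h : ∃ j', e j' = l
  · obtain ⟨j', rfl⟩ := h
    rw [extend0_apply he, extend0_apply he]
    exact hx j' (fun hc => hl (by rw [hc]))
  · rw [extend0_apply' _ h, extend0_apply' _ h]

/-- single-input-change marginal invariance -/
lemma ns_step (he : Function.Injective e) {Q : (Fin n → Fin 2) → (Fin n → Fin 2) → ℝ}
    (hQ : IsNS Q) (j : Fin m) (x x' : Fin n → Fin 2) (hx : ∀ l, l ≠ e j → x l = x' l) :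
    ∑ a : Fin m → Fin 2, Q (extend0 e a) x = ∑ a : Fin m → Fin 2, Q (extend0 e a) x' := by
  have h2 : 2 * ∑ a : Fin m → Fin 2, Q (extend0 e a) x
      = 2 * ∑ a : Fin m → Fin 2, Q (extend0 e a) x' := by
    rw [← sum_update_double (fun a => Q (extend0 e a) x) j,
        ← sum_update_double (fun a => Q (extend0 e a) x') j]
    refine Finset.sum_congr rfl fun a _ => ?_
    simp only [extend0_update he]
    exact hQ (e j) (extend0 e a) x x' hx
  linarith

/-- marginal over the lifted parties is input-independent -/
lemma ns_marg (he : Function.Injective e) {Q : (Fin n → Fin 2) → (Fin n → Fin 2) → ℝ}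
    (hQ : IsNS Q) (x x' : Fin m → Fin 2) :
    ∑ a : Fin m → Fin 2, Q (extend0 e a) (extend0 e x)
      = ∑ a : Fin m → Fin 2, Q (extend0 e a) (extend0 e x') := by
  have main : ∀ s : Finset (Fin m),
      ∑ a : Fin m → Fin 2, Q (extend0 e a) (extend0 e (fun j => if j ∈ s then x' j else x j))
        = ∑ a : Fin m → Fin 2, Q (extend0 e a) (extend0 e x) := by
    intro s
    induction s using Finset.induction_on with
    | empty => simp
    | @insert k s hk ih =>
      rw [← ih]
      have hupd : (fun j => if j ∈ insert k s then x' j else x j)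
          = Function.update (fun j => if j ∈ s then x' j else x j) k (x' k) := by
        funext j
        by_cases hj : j = k
        · subst hj; simp [hk]
        · simp [Function.update_of_ne hj, hj]
      rw [hupd]
      refine ns_step he hQ k _ _ (extend0_agree he fun j' hj' => ?_)
      rw [Function.update_of_ne hj']
  have h1 := main univ
  have h2 : (fun j => if j ∈ (univ : Finset (Fin m)) then x' j else x j) = x' := by
    funext j; simp
  rw [h2] at h1
  exact h1.symm

lemma seedVal_smul (β : (Fin m → Fin 2) → (Fin m → Fin 2) → ℝ) (t : ℝ)
    (F : (Fin m → Fin 2) → (Fin m → Fin 2) → ℝ) :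
    seedVal m β (fun a x => t * F a x) = t * seedVal m β F := by
  unfold seedVal
  rw [mul_sub, Finset.mul_sum]
  congr 1
  refine Finset.sum_congr rfl fun a _ => ?_
  rw [Finset.mul_sum]
  refine Finset.sum_congr rfl fun x _ => ?_
  split_ifs <;> ring

lemma seedVal_sum (N : ℕ) (β : (Fin m → Fin 2) → (Fin m → Fin 2) → ℝ)
    (F : Fin N → (Fin m → Fin 2) → (Fin m → Fin 2) → ℝ) :
    seedVal m β (fun a x => ∑ l, F l a x) = ∑ l, seedVal m β (F l) := by
  unfold seedVal
  rw [Finset.sum_sub_distrib]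
  congr 1
  calc ∑ a : Fin m → Fin 2, ∑ x : Fin m → Fin 2,
        (if a = zvec m ∧ x = zvec m then 0 else β a x * ∑ l, F l a x)
      = ∑ a : Fin m → Fin 2, ∑ x : Fin m → Fin 2, ∑ l,
          (if a = zvec m ∧ x = zvec m then 0 else β a x * F l a x) := by
        refine Finset.sum_congr rfl fun a _ => Finset.sum_congr rfl fun x _ => ?_
        split_ifs with h
        · simp
        · rw [Finset.mul_sum]
    _ = ∑ a : Fin m → Fin 2, ∑ l, ∑ x : Fin m → Fin 2,
          (if a = zvec m ∧ x = zvec m then 0 else β a x * F l a x) :=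
        Finset.sum_congr rfl fun a _ => Finset.sum_comm
    _ = ∑ l, ∑ a : Fin m → Fin 2, ∑ x : Fin m → Fin 2,
          (if a = zvec m ∧ x = zvec m then 0 else β a x * F l a x) := Finset.sum_comm

lemma seedLift_eq (β : (Fin m → Fin 2) → (Fin m → Fin 2) → ℝ)
    (he : Function.Injective e) (P : (Fin n → Fin 2) → (Fin n → Fin 2) → ℝ) :
    seedLift m n β e P = seedVal m β (fun a x => P (extend0 e a) (extend0 e x)) := by
  unfold seedLift seedVal
  simp only [extend0_zvec he]

/-- Lifting a no-signalling distribution on a group `gg` to the parties selected by `e`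
gives a nonnegative multiple of a no-signalling distribution on the preimage group. -/
lemma lift_dist (he : Function.Injective e)
    (gg : Finset (Fin n)) (Q : (Fin n → Fin 2) → (Fin n → Fin 2) → ℝ)
    (hQd : IsDistOn gg Q) (hQn : IsNS Q) :
    ∃ (c : ℝ) (Q' : (Fin m → Fin 2) → (Fin m → Fin 2) → ℝ),
      0 ≤ c ∧ IsDistOn (univ.filter fun j => e j ∈ gg) Q' ∧ IsNS Q' ∧
      ∀ a x, Q (extend0 e a) (extend0 e x) = c * Q' a x := by
  obtain ⟨hQ0, _hQsum, hQdep⟩ := hQd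
  set S : Finset (Fin m) := univ.filter fun j => e j ∈ gg with hS
  set L : (Fin m → Fin 2) → (Fin m → Fin 2) → ℝ :=
    fun a x => Q (extend0 e a) (extend0 e x) with hL
  have hL0 : ∀ a x, 0 ≤ L a x := fun a x => hQ0 _ _
  have hmarg : ∀ x, ∑ a, L a x = ∑ a, L a (zvec m) := fun x => ns_marg he hQn x (zvec m)
  have hagree : ∀ (a a' : Fin m → Fin 2), (∀ j ∈ S, a j = a' j) →
      ∀ k ∈ gg, extend0 e a k = extend0 e a' k := by
    intro a a' ha k hk
    by_cases h : ∃ j, e j = k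
    · obtain ⟨j, rfl⟩ := h
      rw [extend0_apply he, extend0_apply he]
      exact ha j (by simp [hS, hk])
    · rw [extend0_apply' _ h, extend0_apply' _ h]
  have hLdep : DepOn S L := fun a a' x x' ha hx =>
    hQdep _ _ _ _ (hagree a a' ha) (hagree x x' hx)
  have hLNS : IsNS L := by
    intro j a x x' hx
    simp only [hL, extend0_update he]
    exact hQn (e j) (extend0 e a) (extend0 e x) (extend0 e x') (extend0_agree he hx)
  have hpow : (0:ℝ) < 2 ^ (m - S.card) := by positivity
  set c : ℝ := (∑ a, L a (zvec m)) / 2 ^ (m - S.card) with hc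
  have hc0 : 0 ≤ c :=
    div_nonneg (Finset.sum_nonneg fun a _ => hL0 a _) hpow.le
  have hsum : ∀ x, ∑ a, L a x = c * 2 ^ (m - S.card) := by
    intro x
    rw [hmarg x, hc, div_mul_cancel₀ _ hpow.ne']
  by_cases hcz : c = 0
  · have hL00 : ∀ a x, L a x = 0 := by
      intro a x
      have hs := hsum x
      rw [hcz, zero_mul] at hs
      exact (Finset.sum_eq_zero_iff_of_nonneg (fun a _ => hL0 a x)).1 hs a (mem_univ a)
    refine ⟨0, fun _ _ => (2:ℝ) ^ (m - S.card) / 2 ^ m, le_refl 0,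
      ⟨fun _ _ => by positivity, fun x => ?_, fun _ _ _ _ _ _ => rfl⟩,
      fun _ _ _ _ _ => rfl, fun a x => by rw [show Q (extend0 e a) (extend0 e x) = L a x
        from rfl, hL00, zero_mul]⟩
    rw [Finset.sum_const, nsmul_eq_mul]
    have hcard : ((univ : Finset (Fin m → Fin 2)).card : ℝ) = 2 ^ m := by
      simp [Fintype.card_fun]
    rw [hcard]
    have hne : ((2:ℝ) ^ m) ≠ 0 := by positivity
    field_simp
  · refine ⟨c, fun a x => L a x / c, hc0,
      ⟨fun a x => div_nonneg (hL0 a x) hc0, fun x => ?_, ?_⟩, ?_,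
      fun a x => by rw [show Q (extend0 e a) (extend0 e x) = L a x from rfl,
        mul_div_cancel₀ _ hcz]⟩
    · rw [← Finset.sum_div, hsum x, mul_comm, mul_div_assoc, div_self hcz, mul_one]
    · intro a a' x x' ha hx
      simp only
      rw [hLdep a a' x x' ha hx]
    · intro j a x x' hx
      simp only
      rw [← Finset.sum_div, ← Finset.sum_div, hLNS j a x x' hx]

/-- Core case: the seed lifted to an `m`-subset that crosses the bipartition is
nonpositive on products of no-signalling distributions. -/
lemma cross_le (β : (Fin m → Fin 2) → (Fin m → Fin 2) → ℝ)
    (hyp : ∀ P', IsDist m P' → Bisep m P' → seedVal m β P' ≤ 0)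
    (he : Function.Injective e) (g : Finset (Fin n))
    (hj1 : ∃ j, e j ∈ g) (hj2 : ∃ j, e j ∉ g)
    (Q R : (Fin n → Fin 2) → (Fin n → Fin 2) → ℝ)
    (hQd : IsDistOn g Q) (hQn : IsNS Q) (hRd : IsDistOn gᶜ R) (hRn : IsNS R) :
    seedVal m β
      (fun a x => Q (extend0 e a) (extend0 e x) * R (extend0 e a) (extend0 e x)) ≤ 0 := by
  obtain ⟨cQ, Q', hcQ, hQ'd, hQ'ns, hQeq⟩ := lift_dist he g Q hQd hQn
  obtain ⟨cR, R', hcR, hR'd, hR'ns, hReq⟩ := lift_dist he gᶜ R hRd hRn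
  set S : Finset (Fin m) := univ.filter fun j => e j ∈ g with hS
  have hSc : (univ.filter fun j => e j ∈ gᶜ) = Sᶜ := by
    ext j; simp [hS]
  rw [hSc] at hR'd
  have hfun : (fun a x => Q (extend0 e a) (extend0 e x) * R (extend0 e a) (extend0 e x))
      = fun a x => (cQ * cR) * (Q' a x * R' a x) := by
    funext a x; rw [hQeq, hReq]; ring
  rw [hfun, seedVal_smul]
  have hSm : S.card ≤ m := by
    simpa using Finset.card_le_univ S
  have hsum1 : ∀ x, ∑ a, Q' a x * R' a x = 1 := by
    intro x
    have hprod := sum_mul_of_depOn S (fun a => Q' a x) (fun a => R' a x)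
      (fun u v h => hQ'd.2.2 u v x x h (fun _ _ => rfl))
      (fun u v h => hR'd.2.2 u v x x (fun k hk => h k (Finset.mem_compl.1 hk))
        (fun _ _ => rfl))
    rw [hQ'd.2.1 x, hR'd.2.1 x] at hprod
    have hcard : Sᶜ.card = m - S.card := by
      rw [Finset.card_compl]; simp
    rw [hcard, Nat.sub_sub_self hSm] at hprod
    have h2m : ((2:ℝ) ^ (m - S.card)) * 2 ^ S.card = 2 ^ m := by
      rw [← pow_add, Nat.sub_add_cancel hSm]
    rw [h2m] at hprod
    have hne : ((2:ℝ) ^ m) ≠ 0 := by positivity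
    field_simp at hprod
    exact hprod
  have hF : IsDist m (fun a x => Q' a x * R' a x) :=
    ⟨fun a x => mul_nonneg (hQ'd.1 a x) (hR'd.1 a x), hsum1⟩
  have hB : Bisep m (fun a x => Q' a x * R' a x) := by
    refine ⟨1, fun _ => 1, fun _ => S, fun _ => Q', fun _ => R',
      fun _ => zero_le_one, by simp, fun _ => ⟨?_, ?_⟩,
      fun _ => ⟨hQ'd, hQ'ns, hR'd, hR'ns⟩, fun a x => by simp⟩
    · obtain ⟨j, hj⟩ := hj1
      exact ⟨j, by simp [hS, hj]⟩
    · obtain ⟨j, hj⟩ := hj2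
      exact ⟨j, by simp [hS, hj]⟩
  have hval := hyp _ hF hB
  have := mul_le_mul_of_nonneg_left hval (mul_nonneg hcQ hcR)
  simpa using this

end Aux

/-- Part (i) as a standalone lemma. -/
lemma part_one (m n : ℕ) (β : (Fin m → Fin 2) → (Fin m → Fin 2) → ℝ)
    (hβ : ∀ a x, ¬(a = zvec m ∧ x = zvec m) → 0 ≤ β a x)
    (e : Fin m → Fin n) (P : (Fin n → Fin 2) → (Fin n → Fin 2) → ℝ)
    (hP0 : ∀ a x, 0 ≤ P a x) :
    seedLift m n β e P - P (zvec n) (zvec n) ≤ 0 := by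
  unfold seedLift
  have hterm : ∀ a x : Fin m → Fin 2,
      0 ≤ (if a = zvec m ∧ x = zvec m then 0
        else β a x * P (extend0 e a) (extend0 e x)) := by
    intro a x
    split_ifs with h
    · exact le_refl 0
    · exact mul_nonneg (hβ a x h) (hP0 _ _)
  have hsum : 0 ≤ ∑ a : Fin m → Fin 2, ∑ x : Fin m → Fin 2,
      (if a = zvec m ∧ x = zvec m then 0
        else β a x * P (extend0 e a) (extend0 e x)) :=
    Finset.sum_nonneg fun a _ => Finset.sum_nonneg fun x _ => hterm a x
  linarith

/-- for a seed `S = P(0⃗|0⃗) − ∑_{(a,x)≠(0⃗,0⃗)} β_a^x P(a|x)` with all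
`β_a^x ≥ 0` and `m < n` parties: (i) for every `n`-partite probability distribution `P`
and every lifting, `S_{0⃗|0⃗}(P) − P(0⃗|0⃗) ≤ 0`; (ii) if moreover `S ≤ 0` holds on all
biseparable `m`-partite no-signalling distributions, then for any bipartition `g` of the
`n` parties in which at most `k` members of a family of `m`-subsets (given by injections
`e i`) lie within one group, the sum of the lifted seed expressions minus `k·P(0⃗|0⃗)` is
nonpositive on every distribution biseparable along `g`. -/
theorem stmt17 (m n : ℕ) (hm : 1 ≤ m) (hmn : m < n)
    (β : (Fin m → Fin 2) → (Fin m → Fin 2) → ℝ)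
    (hβ : ∀ a x, ¬(a = zvec m ∧ x = zvec m) → 0 ≤ β a x) :
    (∀ (e : Fin m → Fin n), Function.Injective e →
      ∀ P, IsDist n P → seedLift m n β e P - P (zvec n) (zvec n) ≤ 0) ∧
    ((∀ P', IsDist m P' → Bisep m P' → seedVal m β P' ≤ 0) →
      ∀ (ι : ℕ) (e : Fin ι → Fin m → Fin n), (∀ i, Function.Injective (e i)) →
      ∀ (g : Finset (Fin n)) (k : ℕ),
        (univ.filter (fun i : Fin ι =>
            (∀ j, e i j ∈ g) ∨ (∀ j, e i j ∉ g))).card ≤ k →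
      ∀ P, IsDist n P → BisepAlong g P →
        (∑ i, seedLift m n β (e i) P) - (k : ℝ) * P (zvec n) (zvec n) ≤ 0) := by
  constructor
  · intro e _ P hP
    exact part_one m n β hβ e P hP.1
  · intro hyp ι e he g k hk P hP hbis
    obtain ⟨N, q, Qf, Rf, hq0, _hq1, hprops, hPdec⟩ := hbis
    have hP00 : 0 ≤ P (zvec n) (zvec n) := hP.1 _ _
    have hbound : ∀ i : Fin ι, seedLift m n β (e i) P ≤
        if (∀ j, e i j ∈ g) ∨ (∀ j, e i j ∉ g) then P (zvec n) (zvec n) else 0 := by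
      intro i
      split_ifs with hi
      · have := part_one m n β hβ (e i) P hP.1
        linarith
      · push_neg at hi
        obtain ⟨h1, h2⟩ := hi
        obtain ⟨j2, hj2⟩ := h1
        obtain ⟨j1, hj1⟩ := h2
        rw [seedLift_eq β (he i) P]
        have hfun : (fun a x => P (extend0 (e i) a) (extend0 (e i) x))
            = fun a x => ∑ l, q l * (Qf l (extend0 (e i) a) (extend0 (e i) x)
                * Rf l (extend0 (e i) a) (extend0 (e i) x)) := by
          funext a x
          rw [hPdec]
          exact Finset.sum_congr rfl fun l _ => by ring
        rw [hfun, seedVal_sum]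
        refine Finset.sum_nonpos fun l _ => ?_
        rw [seedVal_smul]
        have hc := cross_le β hyp (he i) g ⟨j1, hj1⟩ ⟨j2, hj2⟩ (Qf l) (Rf l)
          (hprops l).1 (hprops l).2.1 (hprops l).2.2.1 (hprops l).2.2.2
        exact mul_nonpos_of_nonneg_of_nonpos (hq0 l) hc
    have hstep : ∑ i, seedLift m n β (e i) P
        ≤ ∑ i : Fin ι, (if (∀ j, e i j ∈ g) ∨ (∀ j, e i j ∉ g)
            then P (zvec n) (zvec n) else 0) :=
      Finset.sum_le_sum fun i _ => hbound i
    have hcount : ∑ i : Fin ι, (if (∀ j, e i j ∈ g) ∨ (∀ j, e i j ∉ g)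
          then P (zvec n) (zvec n) else 0)
        = ((univ.filter (fun i : Fin ι =>
            (∀ j, e i j ∈ g) ∨ (∀ j, e i j ∉ g))).card : ℝ) * P (zvec n) (zvec n) := by
      rw [Finset.sum_ite, Finset.sum_const, Finset.sum_const_zero, add_zero, nsmul_eq_mul]
    have hfinal : ((univ.filter (fun i : Fin ι =>
            (∀ j, e i j ∈ g) ∨ (∀ j, e i j ∉ g))).card : ℝ) * P (zvec n) (zvec n)
        ≤ (k : ℝ) * P (zvec n) (zvec n) := by
      apply mul_le_mul_of_nonneg_right _ hP00
      exact_mod_cast hk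
    linarith

end
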